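/- The number of compositions of n into positive parts avoiding the single substring 22 satisfies: the generating function Σ_σ x^{w(σ)} q^{ℓ(σ)} over all such compositions equals (1−x)(1 + x²q) / [ (1 − x(1+q) + (1−x)x²q)(1 + x²q) − (1−x)x²q ]. -/

import Mathlib

open MvPowerSeries

namespace GF22

lemma prefix2 (t : List ℕ) : [2] <+: t ↔ t.head? = some 2 := by
  cases t with
  | nil => simp
  | cons p u =>
    simp only [List.cons_prefix_cons, List.head?_cons, Option.some.injEq, List.nil_prefix,
      and_true]
    exact eq_comm

lemma infix22_cons (p : ℕ) (t : List ℕ) :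
    [2, 2] <:+: (p :: t) ↔ [2, 2] <:+: t ∨ (p = 2 ∧ t.head? = some 2) := by
  rw [List.infix_cons_iff, List.cons_prefix_cons, prefix2, or_comm]
  tauto

lemma avoid_cons (p : ℕ) (t : List ℕ) :
    ¬ [2, 2] <:+: (p :: t) ↔ (¬ [2, 2] <:+: t) ∧ ¬(p = 2 ∧ t.head? = some 2) := by
  rw [infix22_cons]; tauto

/-- compositions of `n` with `k` parts avoiding `22`. -/
def SA (n k : ℕ) : Set (List ℕ) :=
  {s : List ℕ | (∀ p ∈ s, 0 < p) ∧ s.sum = n ∧ s.length = k ∧ ¬ [2, 2] <:+: s}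

/-- those additionally not starting with `2`. -/
def SB (n k : ℕ) : Set (List ℕ) := {s ∈ SA n k | s.head? ≠ some 2}

/-- those starting with a part `≥ 3`. -/
def SC (n k : ℕ) : Set (List ℕ) := {s ∈ SA n k | ∃ p, 3 ≤ p ∧ s.head? = some p}

lemma finite_sum_len (n k : ℕ) : {s : List ℕ | s.sum = n ∧ s.length = k}.Finite := by
  induction k generalizing n with
  | zero =>
    apply Set.Finite.subset (Set.finite_singleton [])
    rintro s ⟨-, h⟩
    simpa [List.length_eq_zero_iff] using h
  | succ k ih =>
    apply Set.Finite.subset ((Set.finite_Iic n).biUnion (fun p _ => (ih (n - p)).image (p :: ·)))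
    rintro s ⟨hs, hl⟩
    cases s with
    | nil => simp at hl
    | cons p t =>
      have hp : p ≤ n := by simp at hs; omega
      exact Set.mem_biUnion hp ⟨t, ⟨by simp at hs ⊢; omega, by simpa using hl⟩, rfl⟩

lemma finite_SA (n k : ℕ) : (SA n k).Finite :=
  (finite_sum_len n k).subset (fun s hs => ⟨hs.2.1, hs.2.2.1⟩)

lemma finite_SB (n k : ℕ) : (SB n k).Finite := (finite_SA n k).subset (Set.sep_subset _ _)
lemma finite_SC (n k : ℕ) : (SC n k).Finite := (finite_SA n k).subset (Set.sep_subset _ _)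

noncomputable def a (n k : ℕ) : ℕ := (SA n k).ncard
noncomputable def b (n k : ℕ) : ℕ := (SB n k).ncard
noncomputable def c (n k : ℕ) : ℕ := (SC n k).ncard

end GF22

namespace GF22

lemma cons_mem_SA {p : ℕ} {t : List ℕ} {n k : ℕ} :
    (p :: t) ∈ SA n k ↔ 0 < p ∧ p + t.sum = n ∧ t.length + 1 = k ∧
      (∀ q ∈ t, 0 < q) ∧ ¬ [2, 2] <:+: t ∧ ¬(p = 2 ∧ t.head? = some 2) := by
  simp only [SA, Set.mem_setOf_eq, List.mem_cons, List.sum_cons, List.length_cons,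
    avoid_cons]
  constructor
  · rintro ⟨hpos, hsum, hlen, hav, hh⟩
    exact ⟨hpos p (Or.inl rfl), hsum, hlen, fun q hq => hpos q (Or.inr hq), hav, hh⟩
  · rintro ⟨hp, hsum, hlen, hpos, hav, hh⟩
    exact ⟨fun q hq => hq.elim (fun e => e ▸ hp) (hpos q), hsum, hlen, hav, hh⟩

lemma ncard_cons_image (p : ℕ) (T : Set (List ℕ)) : ((p :: ·) '' T).ncard = T.ncard :=
  Set.ncard_image_of_injective _ (fun a b h => by simpa using h)

/-- r3 : splitting by whether the first part is 2. -/
lemma r3 (m j : ℕ) : a (m + 2) (j + 1) = b (m + 2) (j + 1) + b m j := by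
  have him : {s ∈ SA (m + 2) (j + 1) | s.head? = some 2} = (2 :: ·) '' SB m j := by
    ext s
    constructor
    · rintro ⟨hs, hh⟩
      cases s with
      | nil => simp at hh
      | cons p t =>
        simp only [List.head?_cons, Option.some.injEq] at hh
        subst hh
        rw [cons_mem_SA] at hs
        refine ⟨t, ⟨⟨hs.2.2.2.1, by omega, by omega, hs.2.2.2.2.1⟩, ?_⟩, rfl⟩
        exact fun h => hs.2.2.2.2.2 ⟨rfl, h⟩
    · rintro ⟨t, ⟨⟨hpos, hsum, hlen, hav⟩, hh⟩, rfl⟩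
      refine ⟨cons_mem_SA.2 ⟨by norm_num, by omega, by omega, hpos, hav, fun h => hh h.2⟩, rfl⟩
  have hsplit : SA (m + 2) (j + 1) =
      SB (m + 2) (j + 1) ∪ {s ∈ SA (m + 2) (j + 1) | s.head? = some 2} := by
    ext s
    simp only [SB, Set.mem_union, Set.mem_sep_iff]
    tauto
  have hdisj : Disjoint (SB (m + 2) (j + 1)) ((2 :: ·) '' SB m j) := by
    rw [Set.disjoint_left]
    rintro s ⟨-, hh⟩ ⟨t, -, rfl⟩
    exact hh rfl
  rw [a, hsplit, him, Set.ncard_union_eq hdisj (finite_SB _ _) ((finite_SB m j).image _),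
    b, b, ncard_cons_image]

/-- boundary case for r3. -/
lemma r3' (n k : ℕ) (h : k = 0 ∨ n ≤ 1) : a n k = b n k := by
  unfold a b SB
  congr 1
  ext s
  constructor
  · intro hs
    refine ⟨hs, ?_⟩
    intro hh
    cases s with
    | nil => simp at hh
    | cons p t =>
      simp only [List.head?_cons, Option.some.injEq] at hh
      subst hh
      obtain ⟨-, hsum, hlen, -⟩ := hs
      simp only [List.sum_cons, List.length_cons] at hsum hlen
      omega
  · rintro ⟨hs, -⟩; exact hs

end GF22

namespace GF22

lemma himp (p m j : ℕ) (hp0 : 0 < p) (hp2 : p ≠ 2) :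
    {s ∈ SA (m + p) (j + 1) | s.head? = some p} = (p :: ·) '' SA m j := by
  ext s
  constructor
  · rintro ⟨hs, hh⟩
    cases s with
    | nil => simp at hh
    | cons q t =>
      simp only [List.head?_cons, Option.some.injEq] at hh
      subst hh
      obtain ⟨hq, hsum, hlen, hpos, hav, hh2⟩ := cons_mem_SA.1 hs
      exact ⟨t, ⟨hpos, by omega, by omega, hav⟩, rfl⟩
  · rintro ⟨t, ⟨hpos, hsum, hlen, hav⟩, rfl⟩
    exact ⟨cons_mem_SA.2 ⟨hp0, by omega, by omega, hpos, hav, fun h => hp2 h.1⟩, rfl⟩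

lemma him2' (m j : ℕ) :
    {s ∈ SA (m + 2) (j + 1) | s.head? = some 2} = (2 :: ·) '' SB m j := by
  ext s
  constructor
  · rintro ⟨hs, hh⟩
    cases s with
    | nil => simp at hh
    | cons p t =>
      simp only [List.head?_cons, Option.some.injEq] at hh
      subst hh
      obtain ⟨hq, hsum, hlen, hpos, hav, hh2⟩ := cons_mem_SA.1 hs
      refine ⟨t, ⟨⟨hpos, by omega, by omega, hav⟩, ?_⟩, rfl⟩
      exact fun h => hh2 ⟨rfl, h⟩
  · rintro ⟨t, ⟨⟨hpos, hsum, hlen, hav⟩, hh⟩, rfl⟩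
    exact ⟨cons_mem_SA.2 ⟨by norm_num, by omega, by omega, hpos, hav, fun h => hh h.2⟩, rfl⟩

lemma head_empty (n k p : ℕ) (h : n < p ∨ k = 0) :
    {s ∈ SA n k | s.head? = some p} = ∅ := by
  ext s
  simp only [Set.mem_sep_iff, Set.mem_empty_iff_false, iff_false, not_and]
  intro hs hh
  cases s with
  | nil => simp at hh
  | cons q t =>
    simp only [List.head?_cons, Option.some.injEq] at hh
    subst hh
    obtain ⟨-, hsum, hlen, -⟩ := hs
    simp only [List.sum_cons, List.length_cons] at hsum hlen
    omega

lemma head_none (n k : ℕ) :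
    {s ∈ SA n k | s.head? = none} = if n = 0 ∧ k = 0 then {([] : List ℕ)} else ∅ := by
  ext s
  cases s with
  | nil =>
    by_cases h : n = 0 ∧ k = 0 <;>
      simp [SA, h] <;> omega
  | cons p t =>
    by_cases h : n = 0 ∧ k = 0 <;> simp [h]

lemma SC_eq (n k : ℕ) :
    SC n k = {s ∈ SA n k | s.head? = some 3} ∪
      {s ∈ SA n k | ∃ p, 4 ≤ p ∧ s.head? = some p} := by
  ext s
  simp only [SC, Set.mem_sep_iff, Set.mem_union]
  constructor
  · rintro ⟨hs, p, hp, hh⟩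
    rcases Nat.lt_or_ge p 4 with h4 | h4
    · have : p = 3 := by omega
      subst this
      exact Or.inl ⟨hs, hh⟩
    · exact Or.inr ⟨hs, p, h4, hh⟩
  · rintro (⟨hs, hh⟩ | ⟨hs, p, hp, hh⟩)
    · exact ⟨hs, 3, le_refl 3, hh⟩
    · exact ⟨hs, p, by omega, hh⟩

/-- the head-increment map. -/
def g : List ℕ → List ℕ
  | [] => []
  | p :: t => (p + 1) :: t

lemma him4 (n j : ℕ) :
    {s ∈ SA (n + 1) j | ∃ p, 4 ≤ p ∧ s.head? = some p} = g '' SC n j := by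
  ext s
  constructor
  · rintro ⟨hs, p, hp, hh⟩
    cases s with
    | nil => simp at hh
    | cons q t =>
      simp only [List.head?_cons, Option.some.injEq] at hh
      subst hh
      obtain ⟨hq, hsum, hlen, hpos, hav, hh2⟩ := cons_mem_SA.1 hs
      refine ⟨(q - 1) :: t, ⟨cons_mem_SA.2 ⟨by omega, by omega, by omega,
        hpos, hav, fun h => by omega⟩, q - 1, by omega, rfl⟩, ?_⟩
      show ((q - 1) + 1) :: t = q :: t
      congr 1
      omega
  · rintro ⟨s', ⟨hs', p, hp, hh⟩, rfl⟩
    cases s' with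
    | nil => simp at hh
    | cons q t =>
      simp only [List.head?_cons, Option.some.injEq] at hh
      subst hh
      obtain ⟨hq, hsum, hlen, hpos, hav, hh2⟩ := cons_mem_SA.1 hs'
      refine ⟨cons_mem_SA.2 ⟨by omega, by omega, by omega,
        hpos, hav, fun h => by omega⟩, q + 1, by omega, rfl⟩

lemma SC_empty (n k : ℕ) (h : n ≤ 2 ∨ k = 0) : SC n k = ∅ := by
  ext s
  simp only [SC, Set.mem_sep_iff, Set.mem_empty_iff_false, iff_false, not_and]
  rintro hs ⟨p, hp, hh⟩
  cases s with
  | nil => simp at hh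
  | cons q t =>
    simp only [List.head?_cons, Option.some.injEq] at hh
    subst hh
    obtain ⟨-, hsum, hlen, -⟩ := hs
    simp only [List.sum_cons, List.length_cons] at hsum hlen
    omega

lemma c_zero (n k : ℕ) (h : n ≤ 2 ∨ k = 0) : c n k = 0 := by
  rw [c, SC_empty n k h, Set.ncard_empty]

/-- r2: recursion for compositions starting with a part ≥ 3. -/
lemma r2 (m j : ℕ) : c (m + 3) (j + 1) = c (m + 2) (j + 1) + a m j := by
  have hun := SC_eq (m + 3) (j + 1)
  rw [show m + 3 = m + 2 + 1 from rfl] at hun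
  rw [him4, show m + 2 + 1 = m + 3 from rfl, himp 3 m j (by norm_num) (by norm_num)] at hun
  have hdisj : Disjoint ((3 :: ·) '' SA m j) (g '' SC (m + 2) (j + 1)) := by
    rw [Set.disjoint_left]
    rintro s ⟨t, -, rfl⟩ ⟨s', ⟨-, p, hp, hh⟩, hgs⟩
    cases s' with
    | nil => simp at hh
    | cons q u =>
      simp only [List.head?_cons, Option.some.injEq] at hh
      subst hh
      simp only [g, List.cons.injEq] at hgs
      omega
  have hinj : Set.InjOn g (SC (m + 2) (j + 1)) := by
    rintro s ⟨-, p, hp, hh⟩ s' ⟨-, p', hp', hh'⟩ hg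
    cases s with
    | nil => simp at hh
    | cons q t =>
      cases s' with
      | nil => simp at hh'
      | cons q' t' =>
        simp only [g, List.cons.injEq] at hg
        simp only [List.cons.injEq]
        exact ⟨by omega, hg.2⟩
  rw [c, hun, Set.ncard_union_eq hdisj ((finite_SA m j).image _)
      ((finite_SC _ _).image _), ncard_cons_image, Set.ncard_image_of_injOn hinj]
  rw [Nat.add_comm]
  rfl


/-- r1: partition by the first part being absent, 1, 2, or ≥ 3. -/
lemma r1 (n k : ℕ) : a n k = (if n = 0 ∧ k = 0 then 1 else 0)
    + ({s ∈ SA n k | s.head? = some 1}).ncard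
    + ({s ∈ SA n k | s.head? = some 2}).ncard + c n k := by
  have hun : SA n k = {s ∈ SA n k | s.head? = none} ∪
      ({s ∈ SA n k | s.head? = some 1} ∪
        ({s ∈ SA n k | s.head? = some 2} ∪ SC n k)) := by
    ext s
    simp only [Set.mem_union, SC, Set.mem_sep_iff]
    constructor
    · intro hs
      cases s with
      | nil => exact Or.inl ⟨hs, rfl⟩
      | cons p t =>
        have hp : 0 < p := hs.1 p List.mem_cons_self
        rcases Nat.lt_or_ge p 3 with h3 | h3
        · interval_cases p
          · exact Or.inr (Or.inl ⟨hs, rfl⟩)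
          · exact Or.inr (Or.inr (Or.inl ⟨hs, rfl⟩))
        · exact Or.inr (Or.inr (Or.inr ⟨hs, p, h3, rfl⟩))
    · rintro (⟨hs, -⟩ | ⟨hs, -⟩ | ⟨hs, -⟩ | ⟨hs, -⟩) <;> exact hs
  have fin0 : {s ∈ SA n k | s.head? = none}.Finite :=
    (finite_SA n k).subset (Set.sep_subset _ _)
  have fin1 : {s ∈ SA n k | s.head? = some 1}.Finite :=
    (finite_SA n k).subset (Set.sep_subset _ _)
  have fin2 : {s ∈ SA n k | s.head? = some 2}.Finite :=
    (finite_SA n k).subset (Set.sep_subset _ _)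
  have d23 : Disjoint {s ∈ SA n k | s.head? = some 2} (SC n k) := by
    rw [Set.disjoint_left]
    rintro s ⟨-, hh⟩ ⟨-, p, hp, hh'⟩
    rw [hh] at hh'
    simp only [Option.some.injEq] at hh'
    omega
  have d123 : Disjoint {s ∈ SA n k | s.head? = some 1}
      ({s ∈ SA n k | s.head? = some 2} ∪ SC n k) := by
    rw [Set.disjoint_left]
    rintro s ⟨-, hh⟩ (⟨-, hh'⟩ | ⟨-, p, hp, hh'⟩) <;> rw [hh] at hh' <;>
      simp only [Option.some.injEq] at hh' <;> omega
  have d0 : Disjoint {s ∈ SA n k | s.head? = none}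
      ({s ∈ SA n k | s.head? = some 1} ∪
        ({s ∈ SA n k | s.head? = some 2} ∪ SC n k)) := by
    rw [Set.disjoint_left]
    rintro s ⟨-, hh⟩ (⟨-, hh'⟩ | ⟨-, hh'⟩ | ⟨-, p, hp, hh'⟩) <;> rw [hh] at hh' <;> simp at hh'
  have hn0 : ({s ∈ SA n k | s.head? = none}).ncard = if n = 0 ∧ k = 0 then 1 else 0 := by
    rw [head_none]
    by_cases h : n = 0 ∧ k = 0 <;> simp [h]
  have key : (SA n k).ncard = {s ∈ SA n k | s.head? = none}.ncard +
      ({s ∈ SA n k | s.head? = some 1}.ncard +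
        ({s ∈ SA n k | s.head? = some 2}.ncard + (SC n k).ncard)) := by
    conv_lhs => rw [hun]
    rw [Set.ncard_union_eq d0 fin0 (((fin1.union fin2).union (finite_SC n k)).subset
      (by intro s hs; rcases hs with h | h | h;
          exacts [Or.inl (Or.inl h), Or.inl (Or.inr h), Or.inr h])),
      Set.ncard_union_eq d123 fin1 (fin2.union (finite_SC n k)),
      Set.ncard_union_eq d23 fin2 (finite_SC n k)]
  rw [a, key, hn0, c]
  ring

end GF22

namespace GF22

open MvPowerSeries

lemma ncard1 (n k : ℕ) : {s ∈ SA n k | s.head? = some 1}.ncard =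
    if 1 ≤ n ∧ 1 ≤ k then a (n - 1) (k - 1) else 0 := by
  by_cases h : 1 ≤ n ∧ 1 ≤ k
  · obtain ⟨m, rfl⟩ : ∃ m, n = m + 1 := ⟨n - 1, by omega⟩
    obtain ⟨j, rfl⟩ : ∃ j, k = j + 1 := ⟨k - 1, by omega⟩
    rw [if_pos h, himp 1 m j (by norm_num) (by norm_num), ncard_cons_image]
    simp [a]
  · rw [if_neg h, head_empty n k 1 (by omega), Set.ncard_empty]

lemma ncard2 (n k : ℕ) : {s ∈ SA n k | s.head? = some 2}.ncard =
    if 2 ≤ n ∧ 1 ≤ k then b (n - 2) (k - 1) else 0 := by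
  by_cases h : 2 ≤ n ∧ 1 ≤ k
  · obtain ⟨m, rfl⟩ : ∃ m, n = m + 2 := ⟨n - 2, by omega⟩
    obtain ⟨j, rfl⟩ : ∃ j, k = j + 1 := ⟨k - 1, by omega⟩
    rw [if_pos h, him2', ncard_cons_image]
    simp [b]
  · rw [if_neg h, head_empty n k 2 (by omega), Set.ncard_empty]

lemma r1' (n k : ℕ) : a n k = (if n = 0 ∧ k = 0 then 1 else 0)
    + (if 1 ≤ n ∧ 1 ≤ k then a (n - 1) (k - 1) else 0)
    + (if 2 ≤ n ∧ 1 ≤ k then b (n - 2) (k - 1) else 0) + c n k := by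
  rw [r1 n k, ncard1, ncard2]

lemma r2' (n k : ℕ) : c n k = (if 1 ≤ n then c (n - 1) k else 0)
    + (if 3 ≤ n ∧ 1 ≤ k then a (n - 3) (k - 1) else 0) := by
  by_cases h : 3 ≤ n ∧ 1 ≤ k
  · obtain ⟨m, rfl⟩ : ∃ m, n = m + 3 := ⟨n - 3, by omega⟩
    obtain ⟨j, rfl⟩ : ∃ j, k = j + 1 := ⟨k - 1, by omega⟩
    rw [if_pos h, if_pos (by omega)]
    simpa using r2 m j
  · rw [if_neg h, c_zero n k (by omega), add_zero]
    by_cases h1 : 1 ≤ n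
    · rw [if_pos h1, c_zero (n - 1) k (by omega)]
    · rw [if_neg h1]

lemma r3'' (n k : ℕ) : a n k = b n k + (if 2 ≤ n ∧ 1 ≤ k then b (n - 2) (k - 1) else 0) := by
  by_cases h : 2 ≤ n ∧ 1 ≤ k
  · obtain ⟨m, rfl⟩ : ∃ m, n = m + 2 := ⟨n - 2, by omega⟩
    obtain ⟨j, rfl⟩ : ∃ j, k = j + 1 := ⟨k - 1, by omega⟩
    rw [if_pos h]
    simpa using r3 m j
  · rw [if_neg h, add_zero, r3' n k (by omega)]

noncomputable def Bser : MvPowerSeries (Fin 2) ℚ := fun d => (b (d 0) (d 1) : ℚ)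
noncomputable def Cser : MvPowerSeries (Fin 2) ℚ := fun d => (c (d 0) (d 1) : ℚ)

lemma coeff_Bser (d : Fin 2 →₀ ℕ) : coeff d Bser = (b (d 0) (d 1) : ℚ) := rfl
lemma coeff_Cser (d : Fin 2 →₀ ℕ) : coeff d Cser = (c (d 0) (d 1) : ℚ) := rfl

lemma coeff_shift (i j : ℕ) (f : ℕ → ℕ → ℚ) (F : MvPowerSeries (Fin 2) ℚ)
    (hF : ∀ d : Fin 2 →₀ ℕ, coeff d F = f (d 0) (d 1)) (d : Fin 2 →₀ ℕ) :
    coeff d ((X 0 : MvPowerSeries (Fin 2) ℚ) ^ i * X 1 ^ j * F) =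
      if i ≤ d 0 ∧ j ≤ d 1 then f (d 0 - i) (d 1 - j) else 0 := by
  have hmon : (X 0 : MvPowerSeries (Fin 2) ℚ) ^ i * X 1 ^ j =
      monomial (Finsupp.single 0 i + Finsupp.single (1 : Fin 2) j) 1 := by
    rw [X_pow_eq, X_pow_eq, monomial_mul_monomial, mul_one]
  set e : Fin 2 →₀ ℕ := Finsupp.single 0 i + Finsupp.single (1 : Fin 2) j with he
  have he0 : e 0 = i := by simp [he, Finsupp.single_apply]
  have he1 : e 1 = j := by simp [he, Finsupp.single_apply]
  have hle : e ≤ d ↔ i ≤ d 0 ∧ j ≤ d 1 := by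
    rw [Finsupp.le_def, Fin.forall_fin_two, he0, he1]
  rw [hmon, coeff_monomial_mul, one_mul]
  by_cases h : e ≤ d
  · rw [if_pos h, if_pos (hle.1 h), hF, Finsupp.tsub_apply, Finsupp.tsub_apply, he0, he1]
  · rw [if_neg h, if_neg (fun hc => h (hle.2 hc))]

lemma d_eq_zero (d : Fin 2 →₀ ℕ) : d = 0 ↔ d 0 = 0 ∧ d 1 = 0 := by
  rw [Finsupp.ext_iff, Fin.forall_fin_two]
  simp

end GF22

namespace GF22

open MvPowerSeries

variable {G : MvPowerSeries (Fin 2) ℚ}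

lemma hE3 (ha : ∀ d : Fin 2 →₀ ℕ, coeff d G = (a (d 0) (d 1) : ℚ)) :
    G = Bser + X 0 ^ 2 * X 1 ^ 1 * Bser := by
  ext d
  rw [map_add, ha d, coeff_Bser, coeff_shift 2 1 (fun n k => (b n k : ℚ)) Bser coeff_Bser d,
    r3'' (d 0) (d 1)]
  split_ifs <;> push_cast <;> ring

lemma hE1 (ha : ∀ d : Fin 2 →₀ ℕ, coeff d G = (a (d 0) (d 1) : ℚ)) :
    G = 1 + X 0 ^ 1 * X 1 ^ 1 * G + X 0 ^ 2 * X 1 ^ 1 * Bser + Cser := by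
  ext d
  rw [map_add, map_add, map_add, ha d, coeff_Cser,
    coeff_shift 1 1 (fun n k => (a n k : ℚ)) G ha d,
    coeff_shift 2 1 (fun n k => (b n k : ℚ)) Bser coeff_Bser d,
    coeff_one, r1' (d 0) (d 1)]
  simp only [d_eq_zero d]
  split_ifs <;> push_cast <;> first | ring | omega
  
lemma hE2 (ha : ∀ d : Fin 2 →₀ ℕ, coeff d G = (a (d 0) (d 1) : ℚ)) :
    Cser = X 0 ^ 1 * X 1 ^ 0 * Cser + X 0 ^ 3 * X 1 ^ 1 * G := by
  ext d
  rw [map_add, coeff_Cser,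
    coeff_shift 1 0 (fun n k => (c n k : ℚ)) Cser coeff_Cser d,
    coeff_shift 3 1 (fun n k => (a n k : ℚ)) G ha d,
    r2' (d 0) (d 1)]
  simp only [Nat.zero_le, and_true, Nat.sub_zero]
  split_ifs <;> push_cast <;> ring

end GF22

open GF22 in
theorem gf_avoid_22
    (G : MvPowerSeries (Fin 2) ℚ)
    (hG : ∀ d : Fin 2 →₀ ℕ, MvPowerSeries.coeff d G =
      Set.ncard {s : List ℕ | (∀ p ∈ s, 0 < p) ∧ s.sum = d 0 ∧ s.length = d 1 ∧
        ¬ [2, 2] <:+: s}) :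
    G * ((1 - X 0 * (1 + X 1) + (1 - X 0) * X 0 ^ 2 * X 1) * (1 + X 0 ^ 2 * X 1) -
        (1 - X 0) * X 0 ^ 2 * X 1) =
      (1 - X 0) * (1 + X 0 ^ 2 * X 1) := by
  have ha : ∀ d : Fin 2 →₀ ℕ, MvPowerSeries.coeff d G = (a (d 0) (d 1) : ℚ) := fun d => hG d
  have h1 := hE1 ha
  have h2 := hE2 ha
  have h3 := hE3 ha
  linear_combination ((1 + X 0 ^ 2 * X 1) * (1 - X 0)) * h1 + (1 + X 0 ^ 2 * X 1) * h2
    - (X 0 ^ 2 * X 1 * (1 - X 0)) * h3
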